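/- For m ≥ 2, the star K_{1,m} satisfies Φ(K_{1,m}) = 2m. Also, for n ≥ 1 and k with C(2k−1, k) ≥ n, the complete graph satisfies Φ(K_n) ≤ 2k − 1. -/
import Mathlib


/-- An overlap representation of `G`: vertices are adjacent iff their assigned
finite sets intersect and neither is contained in the other. -/
def IsOverlapRep {V : Type*} (G : SimpleGraph V) (f : V → Finset ℕ) : Prop :=
  ∀ u v : V, u ≠ v →
    (G.Adj u v ↔ ((f u ∩ f v).Nonempty ∧ ¬ f u ⊆ f v ∧ ¬ f v ⊆ f u))

/-- A pure overlap representation: adjacency iff intersection, and no assigned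
set contains another. -/
def IsPureOverlapRep {V : Type*} (G : SimpleGraph V) (f : V → Finset ℕ) : Prop :=
  (∀ u v : V, u ≠ v → (G.Adj u v ↔ (f u ∩ f v).Nonempty)) ∧
  (∀ u v : V, u ≠ v → ¬ f u ⊆ f v)

/-- The size of a representation: cardinality of the union of the assigned sets. -/
noncomputable def repSize {V : Type*} (f : V → Finset ℕ) : ℕ :=
  (⋃ v, (f v : Set ℕ)).ncard

/-- The overlap number of `G`. -/
noncomputable def overlapNumber {V : Type*} (G : SimpleGraph V) : ℕ :=
  sInf {n | ∃ f : V → Finset ℕ, IsOverlapRep G f ∧ repSize f = n}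

/-- The pure overlap number of `G`. -/
noncomputable def pureOverlapNumber {V : Type*} (G : SimpleGraph V) : ℕ :=
  sInf {n | ∃ f : V → Finset ℕ, IsPureOverlapRep G f ∧ repSize f = n}

open Finset

lemma repSize_eq_card {V : Type*} [Fintype V] (f : V → Finset ℕ) :
    repSize f = (Finset.univ.biUnion f).card := by
  rw [repSize, ← Set.ncard_coe_finset]
  congr 1
  rw [Finset.coe_biUnion]
  simp

/-- The explicit representation of the star. -/
def starRep (m : ℕ) : (Fin 1 ⊕ Fin m) → Finset ℕ := fun v =>
  match v with
  | Sum.inl _ => (Finset.range m).image (fun i => 2 * i)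
  | Sum.inr i => {2 * (i : ℕ), 2 * (i : ℕ) + 1}

lemma starRep_isRep (m : ℕ) (hm : 2 ≤ m) :
    IsPureOverlapRep (completeBipartiteGraph (Fin 1) (Fin m)) (starRep m) := by
  constructor
  · rintro (a | i) (b | j) huv
    · exact absurd (Subsingleton.elim a b) (by simpa using huv)
    · simp only [completeBipartiteGraph_adj, starRep]
      constructor
      · intro _
        exact ⟨2 * (j : ℕ), by simp⟩
      · intro _; simp
    · simp only [completeBipartiteGraph_adj, starRep]
      constructor
      · intro _
        exact ⟨2 * (i : ℕ), by simp⟩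
      · intro _; simp
    · have hij : (i : ℕ) ≠ (j : ℕ) := fun h => huv (by simpa using Fin.ext h)
      simp only [completeBipartiteGraph_adj, starRep]
      constructor
      · simp
      · rintro ⟨x, hx⟩
        simp only [Finset.mem_inter, Finset.mem_insert, Finset.mem_singleton] at hx
        omega
  · rintro (a | i) (b | j) huv hsub
    · exact absurd (Subsingleton.elim a b) (by simpa using huv)
    · -- center ⊆ leaf j : impossible since 0 and 2 in center
      have h0 : (0 : ℕ) ∈ starRep m (Sum.inl a) :=
        Finset.mem_image.mpr ⟨0, Finset.mem_range.mpr (by omega), rfl⟩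
      have h2 : (2 : ℕ) ∈ starRep m (Sum.inl a) :=
        Finset.mem_image.mpr ⟨1, Finset.mem_range.mpr (by omega), rfl⟩
      have := hsub h0
      have := hsub h2
      simp only [starRep, Finset.mem_insert, Finset.mem_singleton] at this ⊢
      have h0' := hsub h0
      simp only [starRep, Finset.mem_insert, Finset.mem_singleton] at h0'
      omega
    · -- leaf i ⊆ center : impossible since 2i+1 odd
      have h1 : 2 * (i : ℕ) + 1 ∈ starRep m (Sum.inr i) := by simp [starRep]
      have := hsub h1
      simp only [starRep, Finset.mem_image, Finset.mem_range] at this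
      omega
    · have hij : (i : ℕ) ≠ (j : ℕ) := fun h => huv (by simpa using Fin.ext h)
      have h1 : 2 * (i : ℕ) ∈ starRep m (Sum.inr i) := by simp [starRep]
      have := hsub h1
      simp only [starRep, Finset.mem_insert, Finset.mem_singleton] at this
      omega

lemma starRep_size (m : ℕ) : repSize (starRep m) = 2 * m := by
  rw [repSize_eq_card]
  have : (Finset.univ.biUnion (starRep m)) = Finset.range (2 * m) := by
    ext x
    simp only [Finset.mem_biUnion, Finset.mem_univ, true_and, Finset.mem_range]
    constructor
    · rintro ⟨v, hv⟩
      rcases v with a | i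
      · simp only [starRep, Finset.mem_image, Finset.mem_range] at hv
        omega
      · simp only [starRep, Finset.mem_insert, Finset.mem_singleton] at hv
        have := i.2
        omega
    · intro hx
      refine ⟨Sum.inr ⟨x / 2, by omega⟩, ?_⟩
      simp only [starRep, Finset.mem_insert, Finset.mem_singleton]
      omega
  rw [this, Finset.card_range]

lemma starRep_lower (m : ℕ) (f : (Fin 1 ⊕ Fin m) → Finset ℕ)
    (hf : IsPureOverlapRep (completeBipartiteGraph (Fin 1) (Fin m)) f) :
    2 * m ≤ repSize f := by
  classical
  rw [repSize_eq_card]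
  have hsub : (Finset.univ.biUnion (fun i : Fin m => f (Sum.inr i))) ⊆
      Finset.univ.biUnion f := by
    refine Finset.biUnion_subset.mpr fun i _ => ?_
    exact Finset.subset_biUnion_of_mem f (Finset.mem_univ (Sum.inr i))
  refine le_trans ?_ (Finset.card_le_card hsub)
  have hdisj : ∀ i ∈ (Finset.univ : Finset (Fin m)), ∀ j ∈ (Finset.univ : Finset (Fin m)),
      i ≠ j → Disjoint (f (Sum.inr i)) (f (Sum.inr j)) := by
    intro i _ j _ hij
    have hne : (Sum.inr i : Fin 1 ⊕ Fin m) ≠ Sum.inr j := by simpa using hij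
    have := hf.1 _ _ hne
    have hadj : ¬ (completeBipartiteGraph (Fin 1) (Fin m)).Adj (Sum.inr i) (Sum.inr j) := by
      simp
    rw [this] at hadj
    rw [Finset.disjoint_iff_inter_eq_empty]
    exact Finset.not_nonempty_iff_eq_empty.mp hadj
  rw [Finset.card_biUnion hdisj]
  have hcard : ∀ i : Fin m, 2 ≤ (f (Sum.inr i)).card := by
    intro i
    have hne : (Sum.inl (0 : Fin 1) : Fin 1 ⊕ Fin m) ≠ Sum.inr i := by simp
    have hadj : (completeBipartiteGraph (Fin 1) (Fin m)).Adj (Sum.inl 0) (Sum.inr i) := by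
      simp
    have hint := (hf.1 _ _ hne).mp hadj
    obtain ⟨a, ha⟩ := hint
    rw [Finset.mem_inter] at ha
    have hnsub := hf.2 _ _ hne.symm
    rw [Finset.not_subset] at hnsub
    obtain ⟨b, hb, hbn⟩ := hnsub
    have hab : a ≠ b := fun h => hbn (h ▸ ha.1)
    exact Finset.one_lt_card.mpr ⟨a, ha.2, b, hb, hab⟩
  calc 2 * m = ∑ _i : Fin m, 2 := by simp [mul_comm]
    _ ≤ ∑ i : Fin m, (f (Sum.inr i)).card := Finset.sum_le_sum fun i _ => hcard i

theorem stmt_19 :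
    (∀ m : ℕ, 2 ≤ m →
      pureOverlapNumber (completeBipartiteGraph (Fin 1) (Fin m)) = 2 * m) ∧
    (∀ n k : ℕ, 1 ≤ n → n ≤ Nat.choose (2 * k - 1) k →
      pureOverlapNumber (⊤ : SimpleGraph (Fin n)) ≤ 2 * k - 1) := by
  constructor
  · intro m hm
    have hmem : 2 * m ∈ {n | ∃ f : (Fin 1 ⊕ Fin m) → Finset ℕ,
        IsPureOverlapRep (completeBipartiteGraph (Fin 1) (Fin m)) f ∧ repSize f = n} :=
      ⟨starRep m, starRep_isRep m hm, starRep_size m⟩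
    refine le_antisymm (Nat.sInf_le hmem) ?_
    obtain ⟨f, hf, hsize⟩ := Nat.sInf_mem (⟨_, hmem⟩ : Set.Nonempty _)
    show 2 * m ≤ sInf {n | ∃ f : (Fin 1 ⊕ Fin m) → Finset ℕ,
        IsPureOverlapRep (completeBipartiteGraph (Fin 1) (Fin m)) f ∧ repSize f = n}
    rw [← hsize]
    exact starRep_lower m f hf
  · intro n k hn hk
    classical
    set P := Finset.powersetCard k (Finset.range (2 * k - 1)) with hP
    have hcardP : n ≤ P.card := by
      rw [hP, Finset.card_powersetCard, Finset.card_range]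
      exact hk
    have hcard' : Fintype.card (Fin n) ≤ P.card := by simpa using hcardP
    obtain ⟨e, he⟩ := Function.Embedding.exists_of_card_le_finset hcard'
    set f : Fin n → Finset ℕ := fun v => e v with hfdef
    have hmemP : ∀ v, f v ∈ P := fun v => he ⟨v, rfl⟩
    have hcardk : ∀ v, (f v).card = k := fun v =>
      (Finset.mem_powersetCard.mp (hmemP v)).2
    have hsubr : ∀ v, f v ⊆ Finset.range (2 * k - 1) := fun v =>
      (Finset.mem_powersetCard.mp (hmemP v)).1
    have hne : ∀ u v : Fin n, u ≠ v → f u ≠ f v := fun u v huv h =>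
      huv (e.injective h)
    have hrep : IsPureOverlapRep (⊤ : SimpleGraph (Fin n)) f := by
      constructor
      · intro u v huv
        simp only [SimpleGraph.top_adj]
        constructor
        · intro _
          have hfne := hne u v huv
          have hk1 : 1 ≤ k := by
            rcases Nat.eq_zero_or_pos k with h0 | h1
            · exfalso
              apply hfne
              have hu0 : f u = ∅ := Finset.card_eq_zero.mp (by rw [hcardk u, h0])
              have hv0 : f v = ∅ := Finset.card_eq_zero.mp (by rw [hcardk v, h0])
              rw [hu0, hv0]
            · exact h1
          have hu := Finset.card_inter_add_card_union (f u) (f v)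
          have hun : (f u ∪ f v).card ≤ 2 * k - 1 := by
            refine le_trans (Finset.card_le_card ?_) (by rw [Finset.card_range])
            exact Finset.union_subset (hsubr u) (hsubr v)
          have : 1 ≤ (f u ∩ f v).card := by
            rw [hcardk u, hcardk v] at hu
            omega
          exact Finset.card_pos.mp this
        · intro _; exact huv
      · intro u v huv hsub
        exact hne u v huv
          (Finset.eq_of_subset_of_card_le hsub (by rw [hcardk u, hcardk v]))
    have hle : repSize f ≤ 2 * k - 1 := by
      rw [repSize_eq_card]
      refine le_trans (Finset.card_le_card ?_) (le_of_eq (Finset.card_range _))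
      exact Finset.biUnion_subset.mpr fun v _ => hsubr v
    exact le_trans (Nat.sInf_le ⟨f, hrep, rfl⟩) hle
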